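/- If the attachment function satisfies limsup_{i→∞} f(i)/i < f_* := inf_{i≥1} f(i), and λ* is the Malthusian parameter (the unique λ > 0 with ∑_{k=1}^∞ ∏_{i=1}^k f(i)/(λ+f(i)) = 1), then limsup_{i→∞} f(i)/i < λ*. -/

import Mathlib

open Finset Filter

/-- If `limsup_{i→∞} f(i)/i < f_* := inf_{i≥1} f(i)` and `λ*` is the Malthusian parameter
(the unique `λ > 0` with `∑_{k=1}^∞ ∏_{i=1}^k f(i)/(λ+f(i)) = 1`), then
`limsup_{i→∞} f(i)/i < λ*`. -/
theorem limsup_lt_malthusian (f : ℕ → ℝ) (hfpos : ∀ i : ℕ, 1 ≤ i → 0 < f i)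
    (fstar : ℝ) (hfstar : fstar = ⨅ i : {i : ℕ // 1 ≤ i}, f i)
    (hlimsup : Filter.limsup (fun i : ℕ => f i / (i : ℝ)) Filter.atTop < fstar)
    (lam : ℝ) (hlam : 0 < lam)
    (hMalthus : ∑' k : ℕ, ∏ i ∈ Finset.Icc 1 (k + 1), f i / (lam + f i) = 1)
    (hUnique : ∀ lam' : ℝ, 0 < lam' →
      (∑' k : ℕ, ∏ i ∈ Finset.Icc 1 (k + 1), f i / (lam' + f i) = 1) → lam' = lam) :
    Filter.limsup (fun i : ℕ => f i / (i : ℝ)) Filter.atTop < lam := by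
  have hle : fstar ≤ lam := by
    by_contra h
    push_neg at h
    have hfs : 0 < fstar := lt_trans hlam h
    have hbdd : BddBelow (Set.range fun i : {i : ℕ // 1 ≤ i} => f i) := by
      refine ⟨0, ?_⟩
      rintro x ⟨i, rfl⟩
      exact (hfpos i i.2).le
    have hfsle : ∀ i : ℕ, 1 ≤ i → fstar ≤ f i := by
      intro i hi
      rw [hfstar]
      exact ciInf_le hbdd ⟨i, hi⟩
    set r := fstar / (lam + fstar) with hr
    have hden : 0 < lam + fstar := by linarith
    have hr0 : 0 < r := div_pos hfs hden
    have hr1 : r < 1 := (div_lt_one hden).2 (by linarith)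
    have hterm : ∀ k : ℕ, r ^ (k + 1) ≤ ∏ i ∈ Finset.Icc 1 (k + 1), f i / (lam + f i) := by
      intro k
      have hpc : r ^ (k + 1) = ∏ _i ∈ Finset.Icc 1 (k + 1), r := by
        rw [Finset.prod_const, Nat.card_Icc, Nat.add_sub_cancel]
      rw [hpc]
      apply Finset.prod_le_prod
      · intro i _; exact hr0.le
      · intro i hi
        have hi1 : 1 ≤ i := (Finset.mem_Icc.1 hi).1
        have hfi := hfpos i hi1
        have hfsi := hfsle i hi1
        rw [div_le_div_iff₀ hden (by linarith)]
        nlinarith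
    have hsum : Summable (fun k : ℕ => ∏ i ∈ Finset.Icc 1 (k + 1), f i / (lam + f i)) := by
      by_contra hns
      rw [tsum_eq_zero_of_not_summable hns] at hMalthus
      norm_num at hMalthus
    have hgeo : Summable (fun k : ℕ => r ^ (k + 1)) := by
      have := (summable_geometric_of_lt_one hr0.le hr1).mul_left r
      refine this.congr fun k => ?_
      rw [← pow_succ']
    have hts : (∑' k : ℕ, r ^ (k + 1)) ≤ 1 := by
      rw [← hMalthus]
      exact Summable.tsum_le_tsum hterm hgeo hsum
    have hgs : (∑' k : ℕ, r ^ (k + 1)) = fstar / lam := by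
      have h1 : (∑' k : ℕ, r ^ (k + 1)) = r * ∑' k : ℕ, r ^ k := by
        rw [← tsum_mul_left]
        exact tsum_congr fun k => (pow_succ' r k)
      rw [h1, tsum_geometric_of_lt_one hr0.le hr1, hr]
      have h1r : (1 : ℝ) - fstar / (lam + fstar) = lam / (lam + fstar) := by
        field_simp
        ring
      rw [h1r]
      field_simp
    rw [hgs] at hts
    have : fstar ≤ lam := (div_le_one hlam).1 hts
    linarith
  linarith
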